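/- Let w ∈ S_n, p ≤ ν < q with ℓ(w·t_{pq}) = ℓ(w)+1. Set a = #{r < p : w(r) > w(p)}, b = #{r < p : w(r) > w(q)}, c = #{p < r < q : w(r) > w(q)}. Then l_p(w·t_{pq}) = b, l_q(w·t_{pq}) = a + c + 1, and l_j(w·t_{pq}) = l_j(w) for all j ≠ p, q, where l_j(v) = #{i < j : v(i) > v(j)}. -/
import Mathlib


/-- The inversion number `ℓ(w) = #{i < j : w(i) > w(j)}`. -/
noncomputable def ell (w : Equiv.Perm ℕ) : ℕ :=
  Set.ncard {p : ℕ × ℕ | p.1 < p.2 ∧ w p.2 < w p.1}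

/-- `l_j(v) = #{i < j : v(i) > v(j)}` (0-indexed). -/
def code (v : Equiv.Perm ℕ) (j : ℕ) : ℕ :=
  ((Finset.range j).filter fun i => v j < v i).card

open Finset

lemma ell_eq_sum (n : ℕ) (v : Equiv.Perm ℕ) (hv : ∀ i, n ≤ i → v i = i) :
    ell v = ∑ j ∈ range n, code v j := by
  have hlt : ∀ i, i < n → v i < n := by
    intro i hi
    by_contra h
    push_neg at h
    have h2 := hv _ h
    have : v i = i := v.injective (by rw [h2])
    omega
  have hset : {x : ℕ × ℕ | x.1 < x.2 ∧ v x.2 < v x.1} =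
      ↑((range n).biUnion fun j => ((range j).filter fun i => v j < v i).image fun i => (i, j)) := by
    ext ⟨i, j⟩
    simp only [Set.mem_setOf_eq, coe_biUnion, Set.mem_iUnion, mem_coe, mem_image, mem_filter,
      mem_range]
    constructor
    · rintro ⟨hij, hvij⟩
      have hjn : j < n := by
        by_contra hj
        push_neg at hj
        have hvj := hv _ hj
        rcases lt_or_ge i n with hi | hi
        · have := hlt i hi; omega
        · have := hv i hi; omega
      exact ⟨j, hjn, i, ⟨hij, hvij⟩, rfl⟩
    · rintro ⟨j', _, i', ⟨hij, hvij⟩, h⟩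
      obtain ⟨rfl, rfl⟩ := Prod.mk.injEq .. ▸ h
      exact ⟨hij, hvij⟩
  rw [ell, hset, Set.ncard_coe_finset, card_biUnion]
  · refine sum_congr rfl fun j _ => ?_
    rw [card_image_of_injective _ (fun a b h => (Prod.mk.injEq ..).mp h |>.1), code]
  · intro x _ y _ hxy
    simp only [disjoint_left, mem_image, mem_filter]
    rintro ⟨a, b⟩ ⟨i, _, h⟩ ⟨i', _, h'⟩
    obtain ⟨rfl, rfl⟩ := Prod.mk.injEq .. ▸ h
    obtain ⟨-, rfl⟩ := Prod.mk.injEq .. ▸ h'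
    exact hxy rfl
open Finset Equiv

lemma swap_lt {p q j : ℕ} (hp : p < j) (hq : q < j) {i : ℕ} (hi : i < j) :
    Equiv.swap p q i < j := by
  rcases eq_or_ne i p with rfl | hip
  · rw [Equiv.swap_apply_left]; exact hq
  rcases eq_or_ne i q with rfl | hiq
  · rw [Equiv.swap_apply_right]; exact hp
  · rw [Equiv.swap_apply_of_ne_of_ne hip hiq]; exact hi

lemma code_high (w : Equiv.Perm ℕ) (p q j : ℕ) (hp : p < j) (hq : q < j) :
    code (w * Equiv.swap p q) j = code w j := by
  have hWj : (w * Equiv.swap p q) j = w j := by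
    simp [Equiv.Perm.mul_apply,
      Equiv.swap_apply_of_ne_of_ne (by omega : j ≠ p) (by omega : j ≠ q)]
  unfold code
  refine card_bij' (fun i _ => Equiv.swap p q i) (fun i _ => Equiv.swap p q i) ?_ ?_ ?_ ?_
  · intro i hi
    simp only [mem_filter, mem_range, hWj, Equiv.Perm.mul_apply] at hi ⊢
    exact ⟨swap_lt hp hq hi.1, hi.2⟩
  · intro i hi
    simp only [mem_filter, mem_range, hWj, Equiv.Perm.mul_apply, Equiv.swap_apply_self] at hi ⊢
    exact ⟨swap_lt hp hq hi.1, hi.2⟩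
  · intro i _; exact Equiv.swap_apply_self _ _ _
  · intro i _; exact Equiv.swap_apply_self _ _ _

lemma code_low (w : Equiv.Perm ℕ) (p q j : ℕ) (hp : j < p) (hq : j < q) :
    code (w * Equiv.swap p q) j = code w j := by
  unfold code
  congr 1
  refine filter_congr fun i hi => ?_
  simp only [mem_range] at hi
  simp [Equiv.Perm.mul_apply,
    Equiv.swap_apply_of_ne_of_ne (by omega : j ≠ p) (by omega : j ≠ q),
    Equiv.swap_apply_of_ne_of_ne (by omega : i ≠ p) (by omega : i ≠ q)]

lemma code_mid (w : Equiv.Perm ℕ) (p q j : ℕ) (hp : p < j) (hq : j < q) :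
    code (w * Equiv.swap p q) j + (if w j < w p then 1 else 0)
      = code w j + (if w j < w q then 1 else 0) := by
  have hWj : (w * Equiv.swap p q) j = w j := by
    simp [Equiv.Perm.mul_apply,
      Equiv.swap_apply_of_ne_of_ne (by omega : j ≠ p) (by omega : j ≠ q)]
  have hmem : p ∈ range j := mem_range.mpr hp
  have hsum : ∀ v : Equiv.Perm ℕ,
      code v j = (if v j < v p then 1 else 0)
        + ∑ i ∈ (range j).erase p, (if v j < v i then 1 else 0) := by
    intro v
    rw [code, card_filter, ← Finset.add_sum_erase _ _ hmem]
  rw [hsum, hsum]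
  have hW : ∀ i ∈ (range j).erase p, (w * Equiv.swap p q) i = w i := by
    intro i hi
    simp only [mem_erase, mem_range] at hi
    simp [Equiv.Perm.mul_apply,
      Equiv.swap_apply_of_ne_of_ne hi.1 (by omega : i ≠ q)]
  have hs : ∑ i ∈ (range j).erase p, (if (w * Equiv.swap p q) j < (w * Equiv.swap p q) i then 1 else 0)
      = ∑ i ∈ (range j).erase p, (if w j < w i then 1 else 0) := by
    refine sum_congr rfl fun i hi => ?_
    rw [hWj, hW i hi]
  rw [hs]
  have hWp : (w * Equiv.swap p q) p = w q := by
    simp [Equiv.Perm.mul_apply]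
  rw [hWj, hWp]
  omega

lemma code_p_eq (w : Equiv.Perm ℕ) (p q : ℕ) (hpq : p < q) :
    code (w * Equiv.swap p q) p = ((range p).filter fun r => w q < w r).card := by
  unfold code
  congr 1
  refine filter_congr fun i hi => ?_
  simp only [mem_range] at hi
  simp [Equiv.Perm.mul_apply,
    Equiv.swap_apply_of_ne_of_ne (by omega : i ≠ p) (by omega : i ≠ q)]

lemma code_split (u : Equiv.Perm ℕ) (p q : ℕ) (hpq : p < q) :
    code u q = (if u q < u p then 1 else 0)
      + ((range p).filter fun i => u q < u i).card
      + ((Ioo p q).filter fun i => u q < u i).card := by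
  have hr : range q = insert p (range p ∪ Ioo p q) := by
    ext i; simp only [mem_insert, mem_union, mem_range, mem_Ioo]; omega
  have hdisj : Disjoint (range p) (Ioo p q) := by
    rw [disjoint_left]; intro i hi hi'
    simp only [mem_range] at hi; simp only [mem_Ioo] at hi'; omega
  have hnp : p ∉ range p ∪ Ioo p q := by
    simp only [mem_union, mem_range, mem_Ioo]; omega
  rw [code, card_filter, hr, sum_insert hnp, sum_union hdisj, ← card_filter, ← card_filter, add_assoc]


/-- For `w ∈ S_n`, `p ≤ ν < q` with `ℓ(w t_{pq}) = ℓ(w) + 1`, setting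
`a = #{r < p : w(r) > w(p)}`, `b = #{r < p : w(r) > w(q)}`,
`c = #{p < r < q : w(r) > w(q)}`, we have `l_p(w t_{pq}) = b`,
`l_q(w t_{pq}) = a + c + 1`, and `l_j(w t_{pq}) = l_j(w)` for `j ≠ p, q`. -/
theorem stmt16 (n : ℕ) (w : Equiv.Perm ℕ) (hw : ∀ i, n ≤ i → w i = i)
    (ν p q : ℕ) (hpν : p ≤ ν) (hνq : ν < q) (hqn : q < n)
    (hl : ell (w * Equiv.swap p q) = ell w + 1) :
    code (w * Equiv.swap p q) p = ((Finset.range p).filter fun r => w q < w r).card ∧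
    code (w * Equiv.swap p q) q
      = ((Finset.range p).filter fun r => w p < w r).card
        + ((Finset.Ioo p q).filter fun r => w q < w r).card + 1 ∧
    ∀ j, j ≠ p → j ≠ q → code (w * Equiv.swap p q) j = code w j := by
  have hpq : p < q := lt_of_le_of_lt hpν hνq
  set W := w * Equiv.swap p q with hWdef
  have hWfix : ∀ i, n ≤ i → W i = i := by
    intro i hi
    rw [hWdef, Equiv.Perm.mul_apply,
      Equiv.swap_apply_of_ne_of_ne (by omega : i ≠ p) (by omega : i ≠ q)]
    exact hw i hi
  have hWp : W p = w q := by simp [hWdef, Equiv.Perm.mul_apply]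
  have hWq : W q = w p := by simp [hWdef, Equiv.Perm.mul_apply]
  have hWmid : ∀ i, i ≠ p → i ≠ q → W i = w i := by
    intro i h1 h2
    rw [hWdef, Equiv.Perm.mul_apply, Equiv.swap_apply_of_ne_of_ne h1 h2]
  set a := ((range p).filter fun r => w p < w r).card with ha
  set b := ((range p).filter fun r => w q < w r).card with hb
  set c := ((Ioo p q).filter fun r => w q < w r).card with hc
  set c₂ := ((Ioo p q).filter fun r => w p < w r).card with hc₂
  -- compute code W q
  have hcodeWq : code W q = (if w p < w q then 1 else 0) + a + c₂ := by
    rw [code_split W p q hpq, hWq, hWp]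
    have hf1 : ((range p).filter fun i => w p < W i) = ((range p).filter fun i => w p < w i) := by
      refine filter_congr fun i hi => ?_
      simp only [mem_range] at hi
      rw [hWmid i (by omega) (by omega)]
    have hf2 : ((Ioo p q).filter fun i => w p < W i) = ((Ioo p q).filter fun i => w p < w i) := by
      refine filter_congr fun i hi => ?_
      simp only [mem_Ioo] at hi
      rw [hWmid i (by omega) (by omega)]
    rw [hf1, hf2]
  have hcodewq : code w q = (if w q < w p then 1 else 0) + b + c := code_split w p q hpq
  have hcodeWp : code W p = b := code_p_eq w p q hpq
  have hcodewp : code w p = a := rfl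
  -- sum equation from hl
  have hsum1 : (∑ j ∈ range n, ((code W j : ℤ) - (code w j : ℤ))) = 1 := by
    rw [Finset.sum_sub_distrib, hWdef]
    rw [hWdef, ell_eq_sum n (w * Equiv.swap p q) (hWdef ▸ hWfix), ell_eq_sum n w hw] at hl
    have h2 := congrArg (fun x : ℕ => (x : ℤ)) hl
    push_cast at h2
    omega
  -- reduce to p, q, Ioo
  have hsub : insert p (insert q (Ioo p q)) ⊆ range n := by
    intro x hx
    simp only [mem_insert, mem_Ioo] at hx
    simp only [mem_range]
    omega
  have hzero : ∀ j ∈ range n, j ∉ insert p (insert q (Ioo p q)) →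
      ((code W j : ℤ) - (code w j : ℤ)) = 0 := by
    intro j _ hj
    simp only [mem_insert, mem_Ioo, not_or] at hj
    have : j < p ∨ q < j := by omega
    rcases this with h | h
    · rw [hWdef, code_low w p q j h (by omega)]; ring
    · rw [hWdef, code_high w p q j (by omega) h]; ring
  have hsum2 : (∑ j ∈ insert p (insert q (Ioo p q)), ((code W j : ℤ) - (code w j : ℤ))) = 1 := by
    rw [Finset.sum_subset hsub hzero]; exact hsum1
  have hnm1 : p ∉ insert q (Ioo p q) := by
    simp only [mem_insert, mem_Ioo, not_or]
    omega
  have hnm2 : q ∉ Ioo p q := by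
    simp only [mem_Ioo, not_and]
    omega
  rw [Finset.sum_insert hnm1, Finset.sum_insert hnm2] at hsum2
  -- Ioo sum
  have hIoo : (∑ j ∈ Ioo p q, ((code W j : ℤ) - (code w j : ℤ)))
      = (c₂ : ℤ) - (c : ℤ) := by
    have hterm : ∀ j ∈ Ioo p q, ((code W j : ℤ) - (code w j : ℤ))
        = (if w p < w j then (1:ℤ) else 0) - (if w q < w j then (1:ℤ) else 0) := by
      intro j hj
      simp only [mem_Ioo] at hj
      have hm := code_mid w p q j hj.1 hj.2
      rw [← hWdef] at hm
      have hne1 : w j ≠ w p := fun h => by have := w.injective h; omega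
      have hne2 : w j ≠ w q := fun h => by have := w.injective h; omega
      have e1 : (if w j < w p then (1:ℤ) else 0) + (if w p < w j then (1:ℤ) else 0) = 1 := by
        rcases lt_or_gt_of_ne hne1 with hx | hx
        · rw [if_pos hx, if_neg (lt_asymm hx)]; try norm_num
        · rw [if_neg (lt_asymm hx), if_pos hx]; try norm_num
      have e2 : (if w j < w q then (1:ℤ) else 0) + (if w q < w j then (1:ℤ) else 0) = 1 := by
        rcases lt_or_gt_of_ne hne2 with hx | hx
        · rw [if_pos hx, if_neg (lt_asymm hx)]; try norm_num
        · rw [if_neg (lt_asymm hx), if_pos hx]; try norm_num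
      have hm' : (code W j : ℤ) + (if w j < w p then (1:ℤ) else 0)
          = (code w j : ℤ) + (if w j < w q then (1:ℤ) else 0) := by
        exact_mod_cast congrArg (Nat.cast (R := ℤ)) hm
      omega
    rw [Finset.sum_congr rfl hterm, Finset.sum_sub_distrib, Finset.sum_boole, Finset.sum_boole,
      hc₂, hc]
  rw [hIoo] at hsum2
  -- master equation
  have h1 : w p ≠ w q := fun h => by have := w.injective h; omega
  have hwpq : w p < w q := by
    rcases lt_or_gt_of_ne h1 with h | h
    · exact h
    · exfalso
      have hle : c₂ ≤ c := by
        refine card_le_card fun r hr => ?_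
        simp only [mem_filter] at hr ⊢
        exact ⟨hr.1, lt_trans h hr.2⟩
      rw [hcodeWq, hcodewq, hcodeWp, hcodewp, if_neg (lt_asymm h), if_pos h] at hsum2
      push_cast at hsum2
      omega
  have hcc : c₂ = c := by
    rw [hcodeWq, hcodewq, hcodeWp, hcodewp, if_pos hwpq, if_neg (lt_asymm hwpq)] at hsum2
    push_cast at hsum2
    omega
  -- from c₂ = c, filters are equal
  have hiff : ∀ j, p < j → j < q → (w q < w j ↔ w p < w j) := by
    have hsubf : ((Ioo p q).filter fun r => w q < w r)
        ⊆ ((Ioo p q).filter fun r => w p < w r) := by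
      intro r hr
      simp only [mem_filter] at hr ⊢
      exact ⟨hr.1, lt_trans hwpq hr.2⟩
    have heq := Finset.eq_of_subset_of_card_le hsubf (le_of_eq (by rw [← hc, ← hc₂, hcc]))
    intro j hj1 hj2
    constructor
    · intro h
      have hmm : j ∈ (Ioo p q).filter fun r => w p < w r := by
        rw [← heq]; simp only [mem_filter, mem_Ioo]; exact ⟨⟨hj1, hj2⟩, h⟩
      exact (mem_filter.mp hmm).2
    · intro h
      have hmm : j ∈ (Ioo p q).filter fun r => w q < w r := by
        rw [heq]; simp only [mem_filter, mem_Ioo]; exact ⟨⟨hj1, hj2⟩, h⟩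
      exact (mem_filter.mp hmm).2
  refine ⟨hcodeWp, ?_, ?_⟩
  · rw [hcodeWq, if_pos hwpq, hcc]; omega
  · intro j hjp hjq
    rcases lt_trichotomy j p with h | h | h
    · exact code_low w p q j h (by omega)
    · exact absurd h hjp
    rcases lt_trichotomy j q with h2 | h2 | h2
    · -- p < j < q
      have hm := code_mid w p q j h h2
      rw [← hWdef] at hm
      have hne1 : w j ≠ w p := fun hx => by have := w.injective hx; omega
      have hne2 : w j ≠ w q := fun hx => by have := w.injective hx; omega
      have e1 : (if w j < w p then 1 else 0) + (if w p < w j then 1 else 0) = 1 := by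
        rcases lt_or_gt_of_ne hne1 with hx | hx
        · rw [if_pos hx, if_neg (lt_asymm hx)]; try norm_num
        · rw [if_neg (lt_asymm hx), if_pos hx]; try norm_num
      have e2 : (if w j < w q then 1 else 0) + (if w q < w j then 1 else 0) = 1 := by
        rcases lt_or_gt_of_ne hne2 with hx | hx
        · rw [if_pos hx, if_neg (lt_asymm hx)]; try norm_num
        · rw [if_neg (lt_asymm hx), if_pos hx]; try norm_num
      have e3 : (if w q < w j then 1 else 0) = (if w p < w j then 1 else 0) :=
        if_congr (hiff j h h2) rfl rfl
      omega
    · exact absurd h2 hjq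
    · exact code_high w p q j (by omega) h2
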